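/- Let X = {x ∈ ℝⁿ : A x ≤ b} be a nonempty bounded polyhedron (A an m×n real matrix, b ∈ ℝᵐ, the inequality componentwise), and let c ∈ ℝⁿ. Suppose the linear program min_{x ∈ X} c·x has a unique optimal solution x⋆. Then for every x⁰ ∈ ℝⁿ there exists θ_c > 0 such that P_X(x⁰ − θ c) = x⋆ for all θ ≥ θ_c, where P_X is the metric projection onto X. -/

import Mathlib

open scoped RealInnerProductSpace

/-- Let `X = {x : A x ≤ b}` be a nonempty bounded polyhedron and `c ∈ ℝⁿ`.
If the linear program `min_{x ∈ X} c·x` has a unique optimal solution `x⋆`, then for every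
`x⁰` there is `θ_c > 0` such that the metric projection of `x⁰ − θ c` onto `X` is `x⋆`
for all `θ ≥ θ_c` (expressed: `x⋆` minimizes the distance to `x⁰ − θ c` over `X`; since
`X` is closed and convex this says exactly `P_X(x⁰ − θ c) = x⋆`). -/
theorem projection_solves_lp
    (m n : ℕ) (A : Matrix (Fin m) (Fin n) ℝ) (b : Fin m → ℝ)
    (X : Set (EuclideanSpace ℝ (Fin n)))
    (hX : X = {x : EuclideanSpace ℝ (Fin n) | A.mulVec x ≤ b})
    (hXbdd : Bornology.IsBounded X)
    (c xstar : EuclideanSpace ℝ (Fin n))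
    (hopt : xstar ∈ X ∧ ∀ y ∈ X, ⟪c, xstar⟫ ≤ ⟪c, y⟫)
    (huniq : ∀ y ∈ X, ⟪c, y⟫ = ⟪c, xstar⟫ → y = xstar)
    (x0 : EuclideanSpace ℝ (Fin n)) :
    ∃ θc : ℝ, 0 < θc ∧ ∀ θ : ℝ, θc ≤ θ →
      ∀ z ∈ X, dist (x0 - θ • c) xstar ≤ dist (x0 - θ • c) z := by
  obtain ⟨hxX, hxmin⟩ := hopt
  -- pointwise helper lemmas about `mulVec` on `EuclideanSpace`
  have hmv_add : ∀ (v w : EuclideanSpace ℝ (Fin n)) (i : Fin m),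
      A.mulVec (v + w) i = A.mulVec v i + A.mulVec w i := by
    intro v w i
    simp [Matrix.mulVec, dotProduct, PiLp.add_apply, mul_add,
      Finset.sum_add_distrib]
  have hmv_sub : ∀ (v w : EuclideanSpace ℝ (Fin n)) (i : Fin m),
      A.mulVec (v - w) i = A.mulVec v i - A.mulVec w i := by
    intro v w i
    simp [Matrix.mulVec, dotProduct, PiLp.sub_apply, mul_sub,
      Finset.sum_sub_distrib]
  have hmv_smul : ∀ (r : ℝ) (v : EuclideanSpace ℝ (Fin n)) (i : Fin m),
      A.mulVec (r • v) i = r * A.mulVec v i := by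
    intro r v i
    simp [Matrix.mulVec, dotProduct, PiLp.smul_apply, smul_eq_mul,
      Finset.mul_sum, mul_left_comm]
  -- the set of unit feasible directions at `xstar`
  set S : Set (EuclideanSpace ℝ (Fin n)) :=
    {u | ‖u‖ = 1 ∧ ∀ i, A.mulVec xstar i = b i → A.mulVec u i ≤ 0} with hS
  -- each row of `A` acts continuously
  have hrowcont : ∀ i, Continuous fun u : EuclideanSpace ℝ (Fin n) => A.mulVec u i := by
    intro i
    let L : EuclideanSpace ℝ (Fin n) →ₗ[ℝ] ℝ :=
      { toFun := fun u => A.mulVec u i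
        map_add' := fun x y => hmv_add x y i
        map_smul' := fun r x => hmv_smul r x i }
    exact L.continuous_of_finiteDimensional
  -- every `u ∈ S` satisfies `0 < ⟪c, u⟫`
  have hSpos : ∀ u ∈ S, 0 < ⟪c, u⟫ := by
    rintro u ⟨hu1, hu2⟩
    -- find small positive `t` moving into X
    have hall : ∀ i, ∀ᶠ t in nhdsWithin (0:ℝ) (Set.Ioi 0),
        A.mulVec (xstar + t • u) i ≤ b i := by
      intro i
      have hrw : ∀ t : ℝ, A.mulVec (xstar + t • u) i
          = A.mulVec xstar i + t * A.mulVec u i := by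
        intro t; rw [hmv_add, hmv_smul]
      by_cases hact : A.mulVec xstar i = b i
      · filter_upwards [self_mem_nhdsWithin] with t ht
        have ht' : (0:ℝ) < t := ht
        have := hu2 i hact
        rw [hrw, hact]
        nlinarith
      · have hlt : A.mulVec xstar i < b i := by
          have : A.mulVec xstar i ≤ b i := by
            have := hxX; rw [hX] at this; exact this i
          exact lt_of_le_of_ne this hact
        have htend : Filter.Tendsto (fun t : ℝ => t * A.mulVec u i)
            (nhdsWithin (0:ℝ) (Set.Ioi 0)) (nhds 0) := by
          have : Filter.Tendsto (fun t : ℝ => t * A.mulVec u i) (nhds 0)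
              (nhds (0 * A.mulVec u i)) :=
            (continuous_id.mul continuous_const).tendsto 0
          simpa using this.mono_left nhdsWithin_le_nhds
        have hev := htend.eventually
          (eventually_lt_nhds (show (0:ℝ) < b i - A.mulVec xstar i by linarith))
        filter_upwards [hev] with t ht
        rw [hrw]; linarith
    have hcomb := (Filter.eventually_all.2 hall).and self_mem_nhdsWithin
    obtain ⟨t, ht, htpos⟩ := hcomb.exists
    have htpos' : (0:ℝ) < t := htpos
    have hmem : xstar + t • u ∈ X := by
      rw [hX]; intro i; exact ht i
    have hle := hxmin _ hmem
    have hinner : ⟪c, xstar + t • u⟫ = ⟪c, xstar⟫ + t * ⟪c, u⟫ := by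
      rw [inner_add_right, real_inner_smul_right]
    rw [hinner] at hle
    have hnn : 0 ≤ ⟪c, u⟫ := nonneg_of_mul_nonneg_right (by linarith) htpos'
    rcases hnn.lt_or_eq with h | h
    · exact h
    · exfalso
      have heq : ⟪c, xstar + t • u⟫ = ⟪c, xstar⟫ := by rw [hinner, ← h]; ring
      have := huniq _ hmem heq
      have htu : t • u = 0 := by
        have := congrArg (fun w => w - xstar) this
        simpa [add_sub_cancel_left] using this
      rcases smul_eq_zero.1 htu with h' | h'
      · exact htpos'.ne' h'
      · rw [h'] at hu1; simp at hu1
  -- get a uniform ε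
  have hball : ∃ ε : ℝ, 0 < ε ∧ ∀ z ∈ X, ε * ‖z - xstar‖ ≤ ⟪c, z - xstar⟫ := by
    have hSsub : ∀ z ∈ X, z ≠ xstar → (‖z - xstar‖⁻¹ • (z - xstar)) ∈ S := by
      intro z hz hne
      have hnz : ‖z - xstar‖ ≠ 0 := by
        simp [sub_eq_zero, hne]
      constructor
      · rw [norm_smul]
        simp [abs_of_nonneg (inv_nonneg.2 (norm_nonneg _)), inv_mul_cancel₀ hnz]
      · intro i hact
        have h1 : A.mulVec (z - xstar) i ≤ 0 := by
          have h2 : A.mulVec z i ≤ b i := by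
            have := hz; rw [hX] at this; exact this i
          rw [hmv_sub, hact]; linarith
        rw [WithLp.ofLp_smul, WithLp.ofLp_sub, hmv_smul]
        exact mul_nonpos_of_nonneg_of_nonpos (inv_nonneg.2 (norm_nonneg _)) h1
    rcases Set.eq_empty_or_nonempty S with hSe | hSne
    · refine ⟨1, one_pos, fun z hz => ?_⟩
      by_cases hzx : z = xstar
      · simp [hzx]
      · exact absurd (hSsub z hz hzx) (hSe ▸ Set.notMem_empty _)
    · -- S is compact
      have hclosed : IsClosed S := by
        have : S = Metric.sphere (0 : EuclideanSpace ℝ (Fin n)) 1 ∩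
            ⋂ i, {u | A.mulVec xstar i = b i → A.mulVec u i ≤ 0} := by
          ext u
          simp only [hS, Set.mem_setOf_eq, Set.mem_inter_iff, Set.mem_iInter,
            mem_sphere_zero_iff_norm]
        rw [this]
        refine Metric.isClosed_sphere.inter (isClosed_iInter fun i => ?_)
        by_cases hact : A.mulVec xstar i = b i
        · simpa [hact] using isClosed_le (hrowcont i) continuous_const
        · simp [hact]
      have hbdd : Bornology.IsBounded S := by
        apply Bornology.IsBounded.subset
          (Metric.isBounded_closedBall :
            Bornology.IsBounded (Metric.closedBall (0 : EuclideanSpace ℝ (Fin n)) 1))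
        rintro u ⟨hu1, -⟩
        simp [Metric.mem_closedBall, dist_zero_right, hu1]
      have hScompact : IsCompact S := Metric.isCompact_of_isClosed_isBounded hclosed hbdd
      have hcont : Continuous fun u : EuclideanSpace ℝ (Fin n) => ⟪c, u⟫ :=
        continuous_const.inner continuous_id
      obtain ⟨u0, hu0S, hu0min⟩ := hScompact.exists_isMinOn hSne hcont.continuousOn
      refine ⟨⟪c, u0⟫, hSpos u0 hu0S, fun z hz => ?_⟩
      by_cases hzx : z = xstar
      · simp [hzx]
      · have hmem := hSsub z hz hzx
        have hle : ⟪c, u0⟫ ≤ ⟪c, ‖z - xstar‖⁻¹ • (z - xstar)⟫ := hu0min hmem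
        have hnz : (0:ℝ) < ‖z - xstar‖ := by
          simp [norm_pos_iff, sub_eq_zero, hzx]
        rw [real_inner_smul_right] at hle
        have h3 := mul_le_mul_of_nonneg_left hle (le_of_lt hnz)
        rw [← mul_assoc, mul_inv_cancel₀ hnz.ne', one_mul] at h3
        linarith [h3]
  obtain ⟨ε, hε, hkey⟩ := hball
  refine ⟨‖x0 - xstar‖ / ε + 1, by positivity, fun θ hθ z hz => ?_⟩
  have hθε : ‖x0 - xstar‖ ≤ θ * ε := by
    have h1 : ‖x0 - xstar‖ / ε + 1 ≤ θ := hθ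
    have h2 : (‖x0 - xstar‖ / ε) * ε = ‖x0 - xstar‖ := div_mul_cancel₀ _ hε.ne'
    nlinarith
  have hθpos : 0 ≤ θ := le_trans (by positivity) hθ
  -- the obtuse angle condition
  have hobtuse : ⟪(x0 - θ • c) - xstar, z - xstar⟫ ≤ 0 := by
    have hrw : (x0 - θ • c) - xstar = (x0 - xstar) - θ • c := by abel
    rw [hrw, inner_sub_left, real_inner_smul_left]
    have h1 : ⟪x0 - xstar, z - xstar⟫ ≤ ‖x0 - xstar‖ * ‖z - xstar‖ :=
      real_inner_le_norm _ _
    have h2 : ε * ‖z - xstar‖ ≤ ⟪c, z - xstar⟫ := hkey z hz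
    nlinarith [norm_nonneg (z - xstar)]
  rw [dist_eq_norm, dist_eq_norm]
  have hexp := norm_sub_sq_real ((x0 - θ • c) - xstar) (z - xstar)
  have hrw : (x0 - θ • c) - xstar - (z - xstar) = (x0 - θ • c) - z := by abel
  rw [hrw] at hexp
  have hsq : ‖(x0 - θ • c) - xstar‖ ^ 2 ≤ ‖(x0 - θ • c) - z‖ ^ 2 := by
    nlinarith [sq_nonneg ‖z - xstar‖]
  exact (pow_le_pow_iff_left₀ (norm_nonneg _) (norm_nonneg _) two_ne_zero).1 hsq
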